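/- Let D' , D be compact subsets of Euclidean spaces with probability measures, and let f: D' → D be a Lipschitz measure-preserving map. Then sup over γ ∈ Γ(D) of δ̄_D(γ_i, γ) is at most Lip(f) times the sup over γ' ∈ Γ(D') of δ̄_{D'}(γ_i, γ'). -/

import Mathlib

open MeasureTheory Set Filter Metric ProbabilityTheory
open scoped ENNReal NNReal Topology

noncomputable section


abbrev Euc (n : ℕ) := EuclideanSpace ℝ (Fin n)

/-- A plan in `Γ(D)`: probability measure on `D × D` with both marginals `μD`. -/
def IsPlan {n : ℕ} (μD : Measure (Euc n)) (γ : Measure (Euc n × Euc n)) : Prop :=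
  IsProbabilityMeasure γ ∧ γ.map Prod.fst = μD ∧ γ.map Prod.snd = μD

/-- Absolute continuity of a curve on `[0,1]`. -/
def AbsCts {n : ℕ} (ω : ℝ → Euc n) : Prop :=
  IntegrableOn (deriv ω) (Icc (0:ℝ) 1) ∧
  ∀ t ∈ Icc (0:ℝ) 1, ω t = ω 0 + ∫ s in Ioc (0:ℝ) t, deriv ω s

open Classical in
/-- Kinetic action of a curve: `∫₀¹ ½|ω̇|²` if absolutely continuous, `+∞` otherwise. -/
def pathAction {n : ℕ} (ω : ℝ → Euc n) : ℝ≥0∞ :=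
  if _h : AbsCts ω then ∫⁻ t in Icc (0:ℝ) 1, ENNReal.ofReal (‖deriv ω t‖ ^ 2 / 2) else ⊤

/-- Generalized incompressible flow on `[0,1]` connecting the plan `η` to the plan `γ`. -/
def IsGenFlow {n : ℕ} (μD : Measure (Euc n)) (η γ : Measure (Euc n × Euc n))
    (P : Measure ((ℝ → Euc n) × Euc n)) : Prop :=
  IsProbabilityMeasure P ∧
  (∀ t ∈ Icc (0:ℝ) 1, P.map (fun p => p.1 t) = μD) ∧
  P.map (fun p => (p.1 0, p.2)) = η ∧
  P.map (fun p => (p.1 1, p.2)) = γ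

/-- Action of a generalized flow. -/
def flowAction {n : ℕ} (P : Measure ((ℝ → Euc n) × Euc n)) : ℝ≥0∞ :=
  ∫⁻ p, pathAction p.1 ∂P

/-- Squared relaxed distance `δ̄²(η,γ)`. -/
def deltaSq {n : ℕ} (μD : Measure (Euc n)) (η γ : Measure (Euc n × Euc n)) : ℝ≥0∞ :=
  ⨅ P : {P : Measure ((ℝ → Euc n) × Euc n) // IsGenFlow μD η γ P}, flowAction P.1

end

/-- The identity plan `γ_i = (i × i)_# μ_D`. -/
noncomputable def idPlan {n : ℕ} (μD : Measure (Euc n)) : Measure (Euc n × Euc n) :=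
  μD.map (fun x => (x, x))

/-! ### Auxiliary lemmas -/


lemma ae_hasDerivAt_of_incr {E : Type*} [NormedAddCommGroup E] [NormedSpace ℝ E]
    [CompleteSpace E] {u : ℝ → E} (hu : LocallyIntegrable u volume) (F : ℝ → E)
    (hF : ∀ a b : ℝ, a ≤ b → F b - F a = ∫ τ in Ioc a b, u τ) :
    ∀ᵐ (t : ℝ), HasDerivAt F (u t) t := by
  filter_upwards [IsUnifLocDoublingMeasure.ae_tendsto_average_norm_sub
    (volume : Measure ℝ) hu 1] with t ht
  have havg : Tendsto (fun y : ℝ => ⨍ s in closedBall t |y - t|, ‖u s - u t‖) (𝓝[≠] t)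
      (𝓝 0) := by
    refine ht (fun _ => t) (fun y => |y - t|) ?_ ?_
    · rw [tendsto_nhdsWithin_iff]
      constructor
      · have : Tendsto (fun y : ℝ => |y - t|) (𝓝 t) (𝓝 |t - t|) :=
          ((continuous_id.sub continuous_const).abs).continuousAt
        simp only [sub_self, abs_zero] at this
        exact this.mono_left nhdsWithin_le_nhds
      · filter_upwards [self_mem_nhdsWithin] with y hy
        exact abs_pos.2 (sub_ne_zero.2 hy)
    · filter_upwards with y
      simp only [one_mul, mem_closedBall, dist_self]
      positivity
  rw [hasDerivAt_iff_tendsto]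
  have h0 : (fun y : ℝ => ‖y - t‖⁻¹ * ‖F y - F t - (y - t) • u t‖) t = 0 := by simp
  have hsup : 𝓝[≠] t ⊔ pure t = 𝓝 t := nhdsNE_sup_pure t
  rw [← hsup]
  refine Tendsto.sup ?_ (by rw [tendsto_pure_left]; intro s hs; simpa [h0] using mem_of_mem_nhds hs)
  -- squeeze on 𝓝[≠] t
  have key : ∀ y : ℝ, y ≠ t →
      ‖y - t‖⁻¹ * ‖F y - F t - (y - t) • u t‖ ≤
        2 * ⨍ s in closedBall t |y - t|, ‖u s - u t‖ := by
    intro y hy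
    set r := |y - t| with hr
    have hrpos : 0 < r := abs_pos.2 (sub_ne_zero.2 hy)
    have hball : IntegrableOn (fun s => ‖u s - u t‖) (closedBall t r) volume :=
      ((hu.integrableOn_isCompact (isCompact_closedBall t r)).sub
        (integrableOn_const (measure_closedBall_lt_top).ne)).norm
    have hnum : ‖F y - F t - (y - t) • u t‖ ≤ ∫ s in closedBall t r, ‖u s - u t‖ := by
      rcases le_total t y with hty | hyt
      · have hIcc : IntegrableOn u (Ioc t y) volume :=
          (hu.integrableOn_isCompact isCompact_Icc).mono_set Ioc_subset_Icc_self
        have hconst : (y - t) • u t = ∫ _ in Ioc t y, u t := by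
          rw [setIntegral_const, measureReal_def, Real.volume_Ioc, ENNReal.toReal_ofReal (by linarith)]
        rw [hF t y hty, hconst, ← integral_sub hIcc (integrableOn_const (by
          rw [Real.volume_Ioc]; exact ENNReal.ofReal_ne_top))]
        refine (norm_integral_le_integral_norm _).trans ?_
        refine setIntegral_mono_set hball ?_ ?_
        · filter_upwards with s using norm_nonneg _
        · refine HasSubset.Subset.eventuallyLE fun s hs => ?_
          rw [Real.closedBall_eq_Icc]
          rcases hs with ⟨h1, h2⟩
          have hrv : r = y - t := by rw [hr, abs_of_nonneg (sub_nonneg.2 hty)]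
          simp only [mem_Icc]
          constructor <;> rw [hrv] <;> linarith
      · have hIcc : IntegrableOn u (Ioc y t) volume :=
          (hu.integrableOn_isCompact isCompact_Icc).mono_set Ioc_subset_Icc_self
        have hconst : (t - y) • u t = ∫ _ in Ioc y t, u t := by
          rw [setIntegral_const, measureReal_def, Real.volume_Ioc, ENNReal.toReal_ofReal (by linarith)]
        have hkey : F y - F t - (y - t) • u t = -(F t - F y - (t - y) • u t) := by
          have h1 : (y - t) • u t = -((t - y) • u t) := by rw [← neg_smul, neg_sub]
          rw [h1]; abel
        rw [hkey, norm_neg, hF y t hyt, hconst, ← integral_sub hIcc (integrableOn_const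
          (by rw [Real.volume_Ioc]; exact ENNReal.ofReal_ne_top))]
        refine (norm_integral_le_integral_norm _).trans ?_
        refine setIntegral_mono_set hball ?_ ?_
        · filter_upwards with s using norm_nonneg _
        · refine HasSubset.Subset.eventuallyLE fun s hs => ?_
          rw [Real.closedBall_eq_Icc]
          rcases hs with ⟨h1, h2⟩
          have hrv : r = t - y := by rw [hr, abs_of_nonpos (sub_nonpos.2 hyt)]; ring
          simp only [mem_Icc]
          constructor <;> rw [hrv] <;> linarith
    have hvol : ((volume : Measure ℝ) (closedBall t r)).toReal = 2 * r := by
      rw [Real.volume_closedBall, ENNReal.toReal_ofReal (by linarith)]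
    have havg_eq : ∫ s in closedBall t r, ‖u s - u t‖ =
        (2 * r) * ⨍ s in closedBall t r, ‖u s - u t‖ := by
      rw [setAverage_eq, measureReal_def, hvol, smul_eq_mul, ← mul_assoc, mul_inv_cancel₀ (by linarith), one_mul]
    have hnn : ‖y - t‖⁻¹ = r⁻¹ := by rw [Real.norm_eq_abs]
    calc ‖y - t‖⁻¹ * ‖F y - F t - (y - t) • u t‖
        ≤ r⁻¹ * ((2 * r) * ⨍ s in closedBall t r, ‖u s - u t‖) := by
          rw [hnn]
          exact mul_le_mul_of_nonneg_left (le_of_le_of_eq hnum havg_eq) (by positivity)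
      _ = 2 * ⨍ s in closedBall t r, ‖u s - u t‖ := by
          rw [show r⁻¹ * ((2 * r) * ⨍ s in closedBall t r, ‖u s - u t‖)
              = (r⁻¹ * r) * (2 * ⨍ s in closedBall t r, ‖u s - u t‖) by ring,
            inv_mul_cancel₀ hrpos.ne', one_mul]
  refine squeeze_zero' ?_ ?_ (by simpa using havg.const_mul 2)
  · filter_upwards with y; positivity
  · filter_upwards [self_mem_nhdsWithin] with y hy using key y hy


lemma lipschitzWith_integral_deriv {E : Type*} [NormedAddCommGroup E] [NormedSpace ℝ E]
    [FiniteDimensional ℝ E] {C : ℝ≥0} {G : ℝ → E} (hG : LipschitzWith C G)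
    {a b : ℝ} (hab : a ≤ b) :
    ∫ τ in Ioc a b, deriv G τ = G b - G a := by
  have hGc : Continuous G := hG.continuous
  set ε : ℕ → ℝ := fun k => ((k : ℝ) + 1)⁻¹ with hε
  have hεpos : ∀ k, 0 < ε k := fun k => by positivity
  have hεlim : Tendsto ε atTop (𝓝 0) := by
    simpa [hε, one_div] using tendsto_one_div_add_atTop_nhds_zero_nat (𝕜 := ℝ)
  set Fk : ℕ → ℝ → E := fun k τ => (ε k)⁻¹ • (G (τ + ε k) - G τ) with hFk
  -- pointwise convergence
  have h_ae : ∀ᵐ τ ∂(volume.restrict (Ioc a b)),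
      Tendsto (fun k => Fk k τ) atTop (𝓝 (deriv G τ)) := by
    refine ae_restrict_of_ae ?_
    filter_upwards [hG.ae_differentiableAt_real] with τ hτ
    have hd := hasDerivAt_iff_tendsto_slope.1 hτ.hasDerivAt
    have hyt : Tendsto (fun k => τ + ε k) atTop (𝓝[≠] τ) := by
      rw [tendsto_nhdsWithin_iff]
      constructor
      · simpa using (tendsto_const_nhds (x := τ)).add hεlim
      · filter_upwards with k
        simp only [mem_compl_iff, mem_singleton_iff]
        intro h
        exact (hεpos k).ne' (by linarith [congrArg (fun x => x - τ) h])
    have := hd.comp hyt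
    refine this.congr fun k => ?_
    simp only [Function.comp_apply, slope_def_module, add_sub_cancel_left, hFk]
  have h_meas : ∀ k, AEStronglyMeasurable (Fk k) (volume.restrict (Ioc a b)) := fun k =>
    (((hGc.comp (continuous_id.add continuous_const)).sub hGc).const_smul _).aestronglyMeasurable
  have h_bound : ∀ k, ∀ᵐ τ ∂(volume.restrict (Ioc a b)), ‖Fk k τ‖ ≤ (C : ℝ) := by
    intro k
    filter_upwards with τ
    rw [hFk]
    have : ‖G (τ + ε k) - G τ‖ ≤ (C : ℝ) * ε k := by
      have := hG.dist_le_mul (τ + ε k) τ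
      rwa [dist_eq_norm, Real.dist_eq, add_sub_cancel_left, abs_of_pos (hεpos k)] at this
    rw [norm_smul, norm_inv, Real.norm_eq_abs, abs_of_pos (hεpos k)]
    rw [inv_mul_le_iff₀ (hεpos k)]
    linarith [this]
  have hDCT := tendsto_integral_of_dominated_convergence (fun _ => (C : ℝ)) h_meas
    (integrableOn_const (by rw [Real.volume_Ioc]; exact ENNReal.ofReal_ne_top))
    h_bound h_ae
  -- compute the integrals of Fk
  have hII : ∀ p q : ℝ, IntervalIntegrable G volume p q := fun p q => hGc.intervalIntegrable p q
  have hcalc : ∀ k, ∫ τ in Ioc a b, Fk k τ =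
      (ε k)⁻¹ • ((∫ τ in b..(b + ε k), G τ) - ∫ τ in a..(a + ε k), G τ) := by
    intro k
    rw [← intervalIntegral.integral_of_le hab]
    have h1 : ∫ τ in a..b, Fk k τ =
        (ε k)⁻¹ • ((∫ τ in a..b, G (τ + ε k)) - ∫ τ in a..b, G τ) := by
      rw [hFk]
      simp only []
      rw [intervalIntegral.integral_smul, intervalIntegral.integral_sub
        (show IntervalIntegrable (fun τ => G (τ + ε k)) volume a b from
          (hGc.comp (continuous_add_right (ε k))).intervalIntegrable a b) (hII a b)]
    rw [h1, intervalIntegral.integral_comp_add_right]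
    congr 1
    have A1 := intervalIntegral.integral_add_adjacent_intervals (hII a (a + ε k))
      (hII (a + ε k) (b + ε k))
    have A2 := intervalIntegral.integral_add_adjacent_intervals (hII a b) (hII b (b + ε k))
    have : (∫ τ in a + ε k..b + ε k, G τ) =
        (∫ τ in a..b + ε k, G τ) - ∫ τ in a..a + ε k, G τ := by rw [← A1]; abel
    rw [this, ← A2]
    abel
  -- the averaged endpoint terms converge
  have hend : ∀ c : ℝ, Tendsto (fun k => (ε k)⁻¹ • ∫ τ in c..(c + ε k), G τ) atTop (𝓝 (G c)) := by
    intro c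
    rw [tendsto_iff_norm_sub_tendsto_zero]
    refine squeeze_zero (fun k => norm_nonneg _) (fun k => ?_) (by
      simpa using hεlim.const_mul (C : ℝ))
    have hconst : (∫ _ in c..(c + ε k), (G c : E)) = (ε k) • G c := by
      rw [intervalIntegral.integral_const, add_sub_cancel_left]
    have heq : (ε k)⁻¹ • (∫ τ in c..(c + ε k), G τ) - G c =
        (ε k)⁻¹ • ((∫ τ in c..(c + ε k), G τ) - (ε k) • G c) := by
      rw [smul_sub, smul_smul, inv_mul_cancel₀ (hεpos k).ne', one_smul]
    rw [heq, ← hconst, ← intervalIntegral.integral_sub (hII c (c + ε k))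
      (intervalIntegrable_const)]
    have hb : ‖∫ τ in c..(c + ε k), (G τ - G c)‖ ≤ ((C : ℝ) * ε k) * |(c + ε k) - c| := by
      refine intervalIntegral.norm_integral_le_of_norm_le_const fun x hx => ?_
      rw [uIoc_of_le (by linarith [hεpos k])] at hx
      have : ‖G x - G c‖ ≤ (C : ℝ) * |x - c| := by
        have := hG.dist_le_mul x c
        rwa [dist_eq_norm, Real.dist_eq] at this
      refine this.trans (mul_le_mul_of_nonneg_left ?_ C.coe_nonneg)
      rw [abs_of_nonneg (by linarith [hx.1])]
      linarith [hx.2]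
    rw [norm_smul, norm_inv, Real.norm_eq_abs, abs_of_pos (hεpos k)]
    rw [add_sub_cancel_left, abs_of_pos (hεpos k)] at hb
    calc (ε k)⁻¹ * ‖∫ τ in c..(c + ε k), (G τ - G c)‖
        ≤ (ε k)⁻¹ * (((C : ℝ) * ε k) * ε k) :=
          mul_le_mul_of_nonneg_left hb (by positivity)
      _ = (C : ℝ) * ε k := by field_simp
  have hlim2 : Tendsto (fun k => ∫ τ in Ioc a b, Fk k τ) atTop (𝓝 (G b - G a)) := by
    simp only [hcalc, smul_sub]
    exact (hend b).sub (hend a)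
  exact tendsto_nhds_unique hDCT hlim2

theorem pathAction_comp_le {m n : ℕ} {f : Euc m → Euc n} {K : ℝ≥0} (hfL : LipschitzWith K f)
    (ω : ℝ → Euc m) : pathAction (f ∘ ω) ≤ (K : ℝ≥0∞) ^ 2 * pathAction ω := by
  -- trivial case: `K = 0`, so `f` is constant
  rcases eq_or_ne K 0 with rfl | hK
  · have hconst : ∀ x y, f x = f y := fun x y => by
      have := hfL.dist_le_mul x y
      simpa [dist_le_zero] using this
    have hfc : (f ∘ ω) = fun _ => f (ω 0) := funext fun t => hconst _ _
    have hd : deriv (f ∘ ω) = fun _ => (0 : Euc n) := by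
      rw [hfc]; funext t; exact deriv_const t _
    have hAC : AbsCts (f ∘ ω) := by
      refine ⟨by rw [hd]; exact integrableOn_const (by
        rw [Real.volume_Icc]; exact ENNReal.ofReal_ne_top), fun t ht => ?_⟩
      rw [hd, hfc]
      simp
    rw [pathAction, dif_pos hAC, hd]
    simp
  -- trivial case: `ω` is not absolutely continuous
  by_cases hω : AbsCts ω
  swap
  · have : pathAction ω = ⊤ := by rw [pathAction, dif_neg hω]
    rw [this, ENNReal.mul_top (by
      simpa using fun h => hK (by exact_mod_cast h))]
    exact le_top
  obtain ⟨hint, hrep⟩ := hω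
  have hω' : AbsCts ω := ⟨hint, hrep⟩
  set v : ℝ → Euc m := deriv ω with hv
  set u : ℝ → Euc m := (Ioc (0:ℝ) 1).indicator v with hu
  have hv_meas : Measurable v := measurable_deriv ω
  have hu_meas : Measurable u := hv_meas.indicator measurableSet_Ioc
  have hu_int : Integrable u := by
    rw [hu]
    exact (integrable_indicator_iff measurableSet_Ioc).2 (hint.mono_set Ioc_subset_Icc_self)
  have hu_loc : LocallyIntegrable u volume := hu_int.locallyIntegrable
  -- increments of ω
  have hincr : ∀ s t : ℝ, 0 ≤ s → s ≤ t → t ≤ 1 → ω t - ω s = ∫ τ in Ioc s t, v τ := by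
    intro s t h0 hst h1
    rw [hrep t ⟨h0.trans hst, h1⟩, hrep s ⟨h0, hst.trans h1⟩]
    have hsplit : Ioc (0:ℝ) t = Ioc 0 s ∪ Ioc s t := (Ioc_union_Ioc_eq_Ioc h0 hst).symm
    have hsub1 : Ioc (0:ℝ) s ⊆ Icc 0 1 := fun τ hτ => ⟨hτ.1.le, hτ.2.trans (hst.trans h1)⟩
    have hsub2 : Ioc s t ⊆ Icc (0:ℝ) 1 := fun τ hτ => ⟨h0.trans hτ.1.le, hτ.2.trans h1⟩
    have : ∫ τ in Ioc (0:ℝ) t, v τ = (∫ τ in Ioc (0:ℝ) s, v τ) + ∫ τ in Ioc s t, v τ := by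
      rw [hsplit, setIntegral_union (Ioc_disjoint_Ioc_of_le le_rfl) measurableSet_Ioc
        (hint.mono_set hsub1) (hint.mono_set hsub2)]
    rw [this]
    abel
  -- the clamp function
  set c : ℝ → ℝ := fun t => max 0 (min 1 t) with hc
  have hc_mono : Monotone c := fun a b hab => max_le_max le_rfl (min_le_min le_rfl hab)
  have hc_mem : ∀ t, c t ∈ Icc (0:ℝ) 1 := fun t =>
    ⟨le_max_left _ _, max_le zero_le_one (min_le_left _ _)⟩
  have hc_id : ∀ t ∈ Icc (0:ℝ) 1, c t = t := fun t ht => by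
    rw [hc]; simp only [min_eq_right ht.2, max_eq_right ht.1]
  have hIoc_c : ∀ a b : ℝ, Ioc (c a) (c b) = Ioc a b ∩ Ioc 0 1 := by
    intro a b
    ext x
    simp only [hc, mem_Ioc, mem_inter_iff, max_lt_iff, min_lt_iff, le_max_iff, le_min_iff]
    constructor
    · rintro ⟨⟨hx0, hx1⟩, hx2⟩
      rcases hx2 with hx2 | ⟨hx2a, hx2b⟩
      · exact absurd hx2 (not_le.2 hx0)
      · refine ⟨⟨?_, hx2b⟩, hx0, hx2a⟩
        rcases hx1 with h | h
        · linarith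
        · exact h
    · rintro ⟨⟨hxa, hxb⟩, hx0, hx1⟩
      exact ⟨⟨hx0, Or.inr hxa⟩, Or.inr ⟨hx1, hxb⟩⟩
  set ωc : ℝ → Euc m := fun t => ω (c t) with hωc
  have hincrc : ∀ a b : ℝ, a ≤ b → ωc b - ωc a = ∫ τ in Ioc a b, u τ := by
    intro a b hab
    rw [hωc]
    simp only []
    rw [hincr (c a) (c b) (hc_mem a).1 (hc_mono hab) (hc_mem b).2, hIoc_c a b, hu,
      ← setIntegral_indicator measurableSet_Ioc]
  have hωc_d : ∀ᵐ (t : ℝ), HasDerivAt ωc (u t) t := ae_hasDerivAt_of_incr hu_loc ωc hincrc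
  -- the reparametrisation
  set w : ℝ → ℝ := fun τ => ‖u τ‖ + 1 with hw
  have hw1 : ∀ τ, 1 ≤ w τ := fun τ => by rw [hw]; simp [norm_nonneg]
  have hw0 : ∀ τ, 0 ≤ w τ := fun τ => zero_le_one.trans (hw1 τ)
  have hw_meas : Measurable w := hu_meas.norm.add measurable_const
  have hw_int : Integrable (fun τ => ‖u τ‖) := hu_int.norm
  have hw_ii : ∀ p q : ℝ, IntervalIntegrable w volume p q := fun p q =>
    hw_int.intervalIntegrable.add intervalIntegrable_const
  have hw_loc : LocallyIntegrable w volume :=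
    hw_int.locallyIntegrable.add (locallyIntegrable_const 1)
  set S : ℝ → ℝ := fun t => ∫ τ in (0:ℝ)..t, w τ with hS
  have hS_incr : ∀ a b : ℝ, a ≤ b → S b - S a = ∫ τ in Ioc a b, w τ := by
    intro a b hab
    have := intervalIntegral.integral_add_adjacent_intervals (hw_ii 0 a) (hw_ii a b)
    rw [hS]
    simp only []
    rw [← intervalIntegral.integral_of_le hab, ← this]
    abel
  have hS_d : ∀ᵐ (t : ℝ), HasDerivAt S (w t) t := by
    have := ae_hasDerivAt_of_incr hw_loc S hS_incr
    filter_upwards [this] with t ht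
    simpa using ht
  have hS_lb : ∀ a b : ℝ, a ≤ b → b - a ≤ S b - S a := by
    intro a b hab
    rw [hS_incr a b hab]
    have h1 : ∫ τ in Ioc a b, (1:ℝ) ≤ ∫ τ in Ioc a b, w τ := by
      refine setIntegral_mono_on (integrableOn_const (by
        rw [Real.volume_Ioc]; exact ENNReal.ofReal_ne_top))
        ((hw_loc.integrableOn_isCompact isCompact_Icc).mono_set Ioc_subset_Icc_self)
        measurableSet_Ioc (fun τ _ => hw1 τ)
    have h2 : ∫ τ in Ioc a b, (1:ℝ) = b - a := by
      rw [setIntegral_const, measureReal_def, Real.volume_Ioc, ENNReal.toReal_ofReal (by linarith), smul_eq_mul,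
        mul_one]
    linarith
  have hub : ∀ a b : ℝ, a ≤ b → ‖ωc b - ωc a‖ ≤ S b - S a := by
    intro a b hab
    rw [hincrc a b hab, hS_incr a b hab]
    refine (norm_integral_le_integral_norm _).trans ?_
    refine setIntegral_mono_on (hu_int.norm.integrableOn)
      ((hw_loc.integrableOn_isCompact isCompact_Icc).mono_set Ioc_subset_Icc_self)
      measurableSet_Ioc (fun τ _ => by rw [hw]; simp)
  have hS_mono : StrictMono S := fun a b hab => by
    have := hS_lb a b hab.le
    linarith
  have hS_cont : Continuous S := intervalIntegral.continuous_primitive hw_ii 0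
  have hS_meas : Measurable S := hS_cont.measurable
  have hS0 : S 0 = 0 := intervalIntegral.integral_same
  have hS_surj : Function.Surjective S := by
    refine Continuous.surjective hS_cont ?_ ?_
    · refine tendsto_atTop_mono' _ ?_ tendsto_id
      filter_upwards [eventually_ge_atTop (0:ℝ)] with t ht
      have := hS_lb 0 t ht
      simp only [hS0] at this
      simpa using this
    · refine tendsto_atBot_mono' _ ?_ tendsto_id
      filter_upwards [eventually_le_atBot (0:ℝ)] with t ht
      have := hS_lb t 0 ht
      simp only [hS0] at this
      simpa using this
  set e := StrictMono.orderIsoOfSurjective S hS_mono hS_surj with he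
  set σ : ℝ → ℝ := fun y => e.symm y with hσ
  have hσS : ∀ t, σ (S t) = t := fun t =>
    StrictMono.orderIsoOfSurjective_symm_apply_self S hS_mono hS_surj t
  have hSσ : ∀ y, S (σ y) = y := fun y =>
    StrictMono.orderIsoOfSurjective_self_symm_apply S hS_mono hS_surj y
  have hσ_mono : Monotone σ := fun p q hpq => by
    by_contra h
    push_neg at h
    have := hS_mono h
    rw [hSσ, hSσ] at this
    exact absurd hpq (not_le.2 this)
  -- the Lipschitz reparametrised curve
  set G : ℝ → Euc n := fun y => f (ωc (σ y)) with hG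
  have hG_lip : LipschitzWith K G := by
    have key : ∀ p q : ℝ, p ≤ q → dist (G q) (G p) ≤ (K : ℝ) * (q - p) := by
      intro p q hpq
      rw [dist_eq_norm, hG]
      simp only []
      calc ‖f (ωc (σ q)) - f (ωc (σ p))‖ ≤ (K : ℝ) * ‖ωc (σ q) - ωc (σ p)‖ := by
            have := hfL.dist_le_mul (ωc (σ q)) (ωc (σ p))
            rwa [dist_eq_norm, dist_eq_norm] at this
        _ ≤ (K : ℝ) * (S (σ q) - S (σ p)) :=
            mul_le_mul_of_nonneg_left (hub _ _ (hσ_mono hpq)) K.coe_nonneg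
        _ = (K : ℝ) * (q - p) := by rw [hSσ, hSσ]
    refine LipschitzWith.of_dist_le_mul fun p q => ?_
    rcases le_total p q with h | h
    · rw [dist_comm, Real.dist_eq, abs_of_nonpos (by linarith)]
      have := key p q h
      linarith [this, (by linarith : -(p - q) = q - p)]
    · rw [Real.dist_eq, abs_of_nonneg (by linarith)]
      exact key q p h
  have hGS : ∀ t, G (S t) = f (ωc t) := fun t => by rw [hG]; simp only []; rw [hσS]
  -- change of variables measure
  set ν : Measure ℝ := volume.withDensity (fun τ => ENNReal.ofReal (w τ)) with hν
  have hν_Ioc : ∀ p q : ℝ, p ≤ q → ν (Ioc p q) = ENNReal.ofReal (S q - S p) := by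
    intro p q hpq
    rw [hν, withDensity_apply _ measurableSet_Ioc, ← ofReal_integral_eq_lintegral_ofReal
      ((hw_loc.integrableOn_isCompact isCompact_Icc).mono_set Ioc_subset_Icc_self)
      (ae_of_all _ fun τ => hw0 τ), hS_incr p q hpq]
  have hpreIoc : ∀ p q : ℝ, S ⁻¹' (Ioc p q) = Ioc (σ p) (σ q) := by
    intro p q
    ext τ
    simp only [mem_preimage, mem_Ioc]
    constructor
    · rintro ⟨h1, h2⟩
      constructor
      · by_contra h
        push_neg at h
        have := hS_mono.monotone h
        rw [hSσ] at this
        linarith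
      · by_contra h
        push_neg at h
        have := hS_mono h
        rw [hSσ] at this
        linarith
    · rintro ⟨h1, h2⟩
      constructor
      · have := hS_mono h1
        rwa [hSσ] at this
      · have := hS_mono.monotone h2
        rwa [hSσ] at this
  have hmapS : ν.map S = volume := by
    refine Measure.ext_of_Ioc' (ν.map S) volume ?_ ?_
    · intro p q hpq
      rw [Measure.map_apply hS_meas measurableSet_Ioc, hpreIoc,
        hν_Ioc _ _ (hσ_mono hpq.le)]
      exact ENNReal.ofReal_ne_top
    · intro p q hpq
      rw [Measure.map_apply hS_meas measurableSet_Ioc, hpreIoc,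
        hν_Ioc _ _ (hσ_mono hpq.le), hSσ, hSσ, Real.volume_Ioc]
  have habs : ∀ B : Set ℝ, MeasurableSet B → volume B = 0 → volume (S ⁻¹' B) = 0 := by
    intro B hB h0
    have h1 : ν (S ⁻¹' B) = 0 := by
      have hmap := Measure.map_apply (μ := ν) hS_meas hB
      rw [hmapS] at hmap
      rw [← hmap]
      exact h0
    have h2 : volume (S ⁻¹' B) ≤ ν (S ⁻¹' B) := by
      rw [hν, withDensity_apply _ (hS_meas hB)]
      calc volume (S ⁻¹' B) = ∫⁻ τ in S ⁻¹' B, 1 ∂volume := by rw [setLIntegral_one]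
        _ ≤ ∫⁻ τ in S ⁻¹' B, ENNReal.ofReal (w τ) ∂volume :=
            lintegral_mono fun τ => ENNReal.one_le_ofReal.2 (hw1 τ)
    exact le_antisymm (h2.trans h1.le) (zero_le ..)
  have hGdiff : ∀ᵐ (t : ℝ), DifferentiableAt ℝ G (S t) := by
    have hBmeas : MeasurableSet {y : ℝ | ¬DifferentiableAt ℝ G y} :=
      (measurableSet_of_differentiableAt ℝ G).compl
    have hB0 : volume {y : ℝ | ¬DifferentiableAt ℝ G y} = 0 := by
      have := hG_lip.ae_differentiableAt_real
      rwa [ae_iff] at this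
    have := habs _ hBmeas hB0
    rw [ae_iff]
    exact this
  -- chain rule a.e.
  have hchain : ∀ᵐ (t : ℝ), HasDerivAt (fun τ => G (S τ)) (w t • deriv G (S t)) t ∧
      HasDerivAt ωc (u t) t ∧ HasDerivAt S (w t) t := by
    filter_upwards [hωc_d, hS_d, hGdiff] with t h1 h2 h3
    exact ⟨HasDerivAt.scomp t h3.hasDerivAt h2, h1, h2⟩
  -- transfer to the original curve on (0,1)
  have hloc : ∀ t ∈ Ioo (0:ℝ) 1, ((f ∘ ω) =ᶠ[nhds t] (fun τ => G (S τ))) ∧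
      (ω =ᶠ[nhds t] ωc) := by
    intro t ht
    have hmem : Ioo (0:ℝ) 1 ∈ nhds t := isOpen_Ioo.mem_nhds ht
    constructor
    · filter_upwards [hmem] with τ hτ
      rw [Function.comp_apply, hGS, hωc]
      simp only []
      rw [hc_id τ (Ioo_subset_Icc_self hτ)]
    · filter_upwards [hmem] with τ hτ
      rw [hωc]
      simp only []
      rw [hc_id τ (Ioo_subset_Icc_self hτ)]
  set g : ℝ → Euc n := fun t => w t • deriv G (S t) with hg
  have hg_meas : Measurable g :=
    (hw_meas.smul ((measurable_deriv G).comp hS_meas))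
  have hd_main : ∀ᵐ (t : ℝ), t ∈ Ioo (0:ℝ) 1 →
      HasDerivAt (f ∘ ω) (g t) t ∧ HasDerivAt ω (u t) t := by
    filter_upwards [hchain] with t hch ht
    obtain ⟨h1, h2, _⟩ := hch
    obtain ⟨hfe, hωe⟩ := hloc t ht
    exact ⟨h1.congr_of_eventuallyEq hfe, h2.congr_of_eventuallyEq hωe⟩
  have hderiv_eq : ∀ᵐ (t : ℝ), t ∈ Ioo (0:ℝ) 1 → deriv (f ∘ ω) t = g t := by
    filter_upwards [hd_main] with t h ht
    exact (h ht).1.deriv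
  have hbound : ∀ᵐ (t : ℝ), t ∈ Ioo (0:ℝ) 1 → ‖deriv (f ∘ ω) t‖ ≤ (K : ℝ) * ‖v t‖ := by
    filter_upwards [hd_main] with t h ht
    obtain ⟨h1, h2⟩ := h ht
    have hvu : v t = u t := h2.deriv
    have hs1 : Tendsto (fun y => ‖slope (f ∘ ω) t y‖) (nhdsWithin t {t}ᶜ)
        (nhds ‖g t‖) := (hasDerivAt_iff_tendsto_slope.1 h1).norm
    have hs2 : Tendsto (fun y => (K : ℝ) * ‖slope ω t y‖) (nhdsWithin t {t}ᶜ)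
        (nhds ((K : ℝ) * ‖u t‖)) := ((hasDerivAt_iff_tendsto_slope.1 h2).norm).const_mul _
    have hle : ∀ y : ℝ, ‖slope (f ∘ ω) t y‖ ≤ (K : ℝ) * ‖slope ω t y‖ := by
      intro y
      rw [slope_def_module, slope_def_module, norm_smul, norm_smul, Function.comp_apply,
        Function.comp_apply]
      rw [← mul_assoc, mul_comm (K : ℝ) ‖(y - t)⁻¹‖, mul_assoc]
      refine mul_le_mul_of_nonneg_left ?_ (norm_nonneg _)
      have := hfL.dist_le_mul (ω y) (ω t)
      rwa [dist_eq_norm, dist_eq_norm] at this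
    have hfinal : ‖g t‖ ≤ (K : ℝ) * ‖u t‖ :=
      le_of_tendsto_of_tendsto' hs1 hs2 hle
    rw [h1.deriv, hvu]
    exact hfinal
  -- endpoints are negligible
  have hne : ∀ᵐ (t : ℝ), t ≠ 0 ∧ t ≠ 1 := by
    have h0 : volume ({0, 1} : Set ℝ) = 0 := by
      refine measure_union_null ?_ ?_ <;> exact Real.volume_singleton
    have := (measure_eq_zero_iff_ae_notMem).1 h0
    filter_upwards [this] with t ht
    simp only [mem_insert_iff, mem_singleton_iff, not_or] at ht
    exact ht
  have hIcc_bound : ∀ᵐ (t : ℝ), t ∈ Icc (0:ℝ) 1 → ‖deriv (f ∘ ω) t‖ ≤ (K : ℝ) * ‖v t‖ := by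
    filter_upwards [hbound, hne] with t hb hn ht
    exact hb ⟨lt_of_le_of_ne ht.1 (Ne.symm hn.1), lt_of_le_of_ne ht.2 hn.2⟩
  have hint_new : IntegrableOn (deriv (f ∘ ω)) (Icc (0:ℝ) 1) := by
    refine Integrable.mono' (g := fun τ => (K : ℝ) * ‖v τ‖) ?_
      ((measurable_deriv _).aestronglyMeasurable) ?_
    · exact (hint.norm.const_mul _)
    · exact (ae_restrict_iff' measurableSet_Icc).2 hIcc_bound
  -- fundamental theorem of calculus for `f ∘ ω`
  have hωceq : ∀ t ∈ Icc (0:ℝ) 1, ωc t = ω t := fun t ht => by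
    rw [hωc]; simp only []; rw [hc_id t ht]
  have hFTC : ∀ t ∈ Icc (0:ℝ) 1, (f ∘ ω) t = (f ∘ ω) 0 + ∫ τ in Ioc (0:ℝ) t, deriv (f ∘ ω) τ := by
    intro t ht
    have hSt0 : 0 ≤ S t := by
      have := hS_lb 0 t ht.1
      rw [hS0] at this
      linarith [ht.1]
    have step1 : ∫ y in Ioc (0:ℝ) (S t), deriv G y = G (S t) - G 0 :=
      lipschitzWith_integral_deriv hG_lip hSt0
    have hσ0 : σ 0 = 0 := by
      have := hσS 0
      rwa [hS0] at this
    have hpre : S ⁻¹' (Ioc 0 (S t)) = Ioc 0 t := by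
      rw [hpreIoc 0 (S t), hσS, hσ0]
    have step2 : ∫ y in Ioc (0:ℝ) (S t), deriv G y = ∫ τ in Ioc (0:ℝ) t, g τ := by
      calc ∫ y in Ioc (0:ℝ) (S t), deriv G y
          = ∫ y, deriv G y ∂((ν.map S).restrict (Ioc 0 (S t))) := by rw [hmapS]
        _ = ∫ y, deriv G y ∂((ν.restrict (Ioc 0 t)).map S) := by
            rw [Measure.restrict_map hS_meas measurableSet_Ioc, hpre]
        _ = ∫ τ, deriv G (S τ) ∂(ν.restrict (Ioc 0 t)) :=
            integral_map hS_meas.aemeasurable ((measurable_deriv G).aestronglyMeasurable)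
        _ = ∫ τ, deriv G (S τ) ∂((volume.restrict (Ioc 0 t)).withDensity
              (fun τ => ENNReal.ofReal (w τ))) := by
            rw [hν, restrict_withDensity measurableSet_Ioc]
        _ = ∫ τ in Ioc (0:ℝ) t, g τ := by
            have hwnn : Measurable (fun τ => Real.toNNReal (w τ)) := hw_meas.real_toNNReal
            have := integral_withDensity_eq_integral_smul hwnn
              (μ := volume.restrict (Ioc (0:ℝ) t)) (fun y => deriv G (S y))
            rw [show (fun τ => ENNReal.ofReal (w τ))
                = (fun τ => ((Real.toNNReal (w τ) : ℝ≥0) : ℝ≥0∞)) from rfl, this]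
            refine integral_congr_ae (ae_of_all _ fun τ => ?_)
            rw [hg]
            simp only []
            rw [NNReal.smul_def, Real.coe_toNNReal _ (hw0 τ)]
    have step3 : ∫ τ in Ioc (0:ℝ) t, g τ = ∫ τ in Ioc (0:ℝ) t, deriv (f ∘ ω) τ := by
      refine integral_congr_ae ?_
      have hglobal : ∀ᵐ (τ : ℝ), τ ∈ Ioc (0:ℝ) t → g τ = deriv (f ∘ ω) τ := by
        filter_upwards [hderiv_eq, hne] with τ hd hn hτ
        exact (hd ⟨hτ.1, lt_of_le_of_ne (hτ.2.trans ht.2) hn.2⟩).symm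
      exact (ae_restrict_iff' measurableSet_Ioc).2 hglobal
    have e1 : (f ∘ ω) t = G (S t) := by
      rw [Function.comp_apply, hGS, hωceq t ht]
    have e0 : (f ∘ ω) 0 = G 0 := by
      have hg0 : G 0 = f (ωc 0) := by rw [hG]; simp only []; rw [hσ0]
      rw [hg0, hωceq 0 ⟨le_refl 0, zero_le_one⟩, Function.comp_apply]
    rw [e1, e0, ← step3, ← step2, step1]
    abel
  have hAC : AbsCts (f ∘ ω) := ⟨hint_new, hFTC⟩
  -- the action estimate
  rw [pathAction, dif_pos hAC]
  have hRHS : pathAction ω = ∫⁻ t in Icc (0:ℝ) 1, ENNReal.ofReal (‖deriv ω t‖ ^ 2 / 2) := by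
    rw [pathAction, dif_pos hω']
  rw [hRHS]
  calc ∫⁻ t in Icc (0:ℝ) 1, ENNReal.ofReal (‖deriv (f ∘ ω) t‖ ^ 2 / 2)
      ≤ ∫⁻ t in Icc (0:ℝ) 1, (K : ℝ≥0∞) ^ 2 * ENNReal.ofReal (‖deriv ω t‖ ^ 2 / 2) := by
        refine lintegral_mono_ae ?_
        have := (ae_restrict_iff' measurableSet_Icc).2 hIcc_bound
        filter_upwards [this] with t hb
        have h1 : ‖deriv (f ∘ ω) t‖ ^ 2 / 2 ≤ ((K : ℝ) * ‖v t‖) ^ 2 / 2 := by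
          have h2 : (0:ℝ) ≤ ‖deriv (f ∘ ω) t‖ := norm_nonneg _
          have h3 : (0:ℝ) ≤ (K : ℝ) * ‖v t‖ := by positivity
          nlinarith
        refine le_trans (ENNReal.ofReal_le_ofReal h1) ?_
        rw [show ((K : ℝ) * ‖v t‖) ^ 2 / 2 = (K : ℝ) ^ 2 * (‖v t‖ ^ 2 / 2) by ring,
          ENNReal.ofReal_mul (by positivity), ENNReal.ofReal_pow K.coe_nonneg,
          ENNReal.ofReal_coe_nnreal]
    _ = (K : ℝ≥0∞) ^ 2 * ∫⁻ t in Icc (0:ℝ) 1, ENNReal.ofReal (‖deriv ω t‖ ^ 2 / 2) :=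
        lintegral_const_mul' _ _ (ENNReal.pow_ne_top ENNReal.coe_ne_top)

section Aux

variable {m n : ℕ}


lemma measurable_comp_left {f : Euc m → Euc n} (hf : Measurable f) :
    Measurable (fun p : (ℝ → Euc m) × Euc m => ((f ∘ p.1 : ℝ → Euc n), f p.2)) := by
  refine Measurable.prod ?_ (hf.comp measurable_snd)
  exact measurable_pi_lambda _ fun t => hf.comp ((measurable_pi_apply t).comp measurable_fst)

lemma flow_nonempty (μ : Measure (Euc n)) [IsProbabilityMeasure μ]
    {γ : Measure (Euc n × Euc n)} (hγ : IsPlan μ γ) :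
    IsGenFlow μ (idPlan μ) γ
      (γ.map (fun q => ((fun t => if t < (1:ℝ) then q.2 else q.1), q.2))) := by
  obtain ⟨hpγ, h1, h2⟩ := hγ
  have mT : Measurable (fun q : Euc n × Euc n =>
      ((fun t => if t < (1:ℝ) then q.2 else q.1), q.2)) := by
    refine Measurable.prod ?_ measurable_snd
    refine measurable_pi_lambda _ fun t => ?_
    by_cases h : t < (1:ℝ) <;> simp only [if_pos, if_neg, h, if_true, if_false]
    exacts [measurable_snd, measurable_fst]
  refine ⟨Measure.isProbabilityMeasure_map mT.aemeasurable, ?_, ?_, ?_⟩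
  · intro t _
    rw [Measure.map_map (by exact (measurable_pi_apply t).comp measurable_fst) mT]
    by_cases h : t < (1:ℝ)
    · have hc : ((fun p : (ℝ → Euc n) × Euc n => p.1 t) ∘
          (fun q : Euc n × Euc n => ((fun t => if t < (1:ℝ) then q.2 else q.1), q.2)))
          = Prod.snd := by funext q; simp [h]
      rw [hc]; exact h2
    · have hc : ((fun p : (ℝ → Euc n) × Euc n => p.1 t) ∘
          (fun q : Euc n × Euc n => ((fun t => if t < (1:ℝ) then q.2 else q.1), q.2)))
          = Prod.fst := by funext q; simp [h]
      rw [hc]; exact h1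
  · rw [Measure.map_map (by exact ((measurable_pi_apply 0).comp measurable_fst).prod measurable_snd) mT]
    have : ((fun p : (ℝ → Euc n) × Euc n => (p.1 0, p.2)) ∘
        (fun q : Euc n × Euc n => ((fun t => if t < (1:ℝ) then q.2 else q.1), q.2)))
        = (fun x : Euc n => (x, x)) ∘ Prod.snd := by
      funext q; simp [zero_lt_one]
    rw [this, ← Measure.map_map (measurable_id.prod measurable_id) measurable_snd, h2, idPlan]
  · rw [Measure.map_map (by exact ((measurable_pi_apply 1).comp measurable_fst).prod measurable_snd) mT]
    have : ((fun p : (ℝ → Euc n) × Euc n => (p.1 1, p.2)) ∘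
        (fun q : Euc n × Euc n => ((fun t => if t < (1:ℝ) then q.2 else q.1), q.2))) = id := by
      funext q; simp
    rw [this, Measure.map_id]

lemma idPlan_map {f : Euc m → Euc n} (hf : Measurable f) (μ' : Measure (Euc m)) :
    (idPlan μ').map (Prod.map f f) = idPlan (μ'.map f) := by
  rw [idPlan, idPlan, Measure.map_map (hf.prodMap hf) (measurable_id'.prod measurable_id'),
    Measure.map_map (measurable_id'.prod measurable_id') hf]
  rfl

lemma isGenFlow_comp {f : Euc m → Euc n} (hf : Measurable f)
    {μ' : Measure (Euc m)} {μ : Measure (Euc n)} (hfp : μ'.map f = μ)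
    {γ' : Measure (Euc m × Euc m)} {P' : Measure ((ℝ → Euc m) × Euc m)}
    (hP' : IsGenFlow μ' (idPlan μ') γ' P') :
    IsGenFlow μ (idPlan μ) (γ'.map (Prod.map f f))
      (P'.map (fun p => ((f ∘ p.1 : ℝ → Euc n), f p.2))) := by
  obtain ⟨hprob, hmarg, h0, h1⟩ := hP'
  have mF := measurable_comp_left hf
  refine ⟨Measure.isProbabilityMeasure_map mF.aemeasurable, ?_, ?_, ?_⟩
  · intro t ht
    rw [Measure.map_map (by exact (measurable_pi_apply t).comp measurable_fst) mF]
    have : ((fun p : (ℝ → Euc n) × Euc n => p.1 t) ∘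
        (fun p : (ℝ → Euc m) × Euc m => ((f ∘ p.1 : ℝ → Euc n), f p.2)))
        = f ∘ (fun p : (ℝ → Euc m) × Euc m => p.1 t) := rfl
    rw [this, ← Measure.map_map hf (by exact (measurable_pi_apply t).comp measurable_fst),
      hmarg t ht, hfp]
  · rw [Measure.map_map (by exact ((measurable_pi_apply 0).comp measurable_fst).prod measurable_snd) mF]
    have : ((fun p : (ℝ → Euc n) × Euc n => (p.1 0, p.2)) ∘
        (fun p : (ℝ → Euc m) × Euc m => ((f ∘ p.1 : ℝ → Euc n), f p.2)))
        = (Prod.map f f) ∘ (fun p : (ℝ → Euc m) × Euc m => (p.1 0, p.2)) := rfl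
    rw [this, ← Measure.map_map (hf.prodMap hf)
      (by exact ((measurable_pi_apply 0).comp measurable_fst).prod measurable_snd), h0,
      idPlan_map hf, hfp]
  · rw [Measure.map_map (by exact ((measurable_pi_apply 1).comp measurable_fst).prod measurable_snd) mF]
    have : ((fun p : (ℝ → Euc n) × Euc n => (p.1 1, p.2)) ∘
        (fun p : (ℝ → Euc m) × Euc m => ((f ∘ p.1 : ℝ → Euc n), f p.2)))
        = (Prod.map f f) ∘ (fun p : (ℝ → Euc m) × Euc m => (p.1 1, p.2)) := rfl
    rw [this, ← Measure.map_map (hf.prodMap hf)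
      (by exact ((measurable_pi_apply 1).comp measurable_fst).prod measurable_snd), h1]

lemma flowAction_comp_le {f : Euc m → Euc n} (hf : Measurable f) {K : ℝ≥0}
    (hfL : LipschitzWith K f) (P' : Measure ((ℝ → Euc m) × Euc m)) :
    flowAction (P'.map (fun p => ((f ∘ p.1 : ℝ → Euc n), f p.2))) ≤
      (K : ℝ≥0∞) ^ 2 * flowAction P' := by
  calc flowAction (P'.map (fun p => ((f ∘ p.1 : ℝ → Euc n), f p.2)))
      ≤ ∫⁻ p, pathAction (f ∘ p.1) ∂P' :=
        lintegral_map_le _ _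
    _ ≤ ∫⁻ p, (K : ℝ≥0∞) ^ 2 * pathAction p.1 ∂P' :=
        lintegral_mono fun p => pathAction_comp_le hfL p.1
    _ = (K : ℝ≥0∞) ^ 2 * flowAction P' :=
        lintegral_const_mul' _ _ (by exact ENNReal.pow_ne_top ENNReal.coe_ne_top)

lemma exists_plan_lift {f : Euc m → Euc n} (hf : Measurable f)
    {μ' : Measure (Euc m)} [IsProbabilityMeasure μ'] {μ : Measure (Euc n)}
    (hfp : μ'.map f = μ)
    {γ : Measure (Euc n × Euc n)} (hγ : IsPlan μ γ) :
    ∃ γ' : Measure (Euc m × Euc m), IsPlan μ' γ' ∧ γ'.map (Prod.map f f) = γ := by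
  haveI hμprob : IsProbabilityMeasure μ := hfp ▸ Measure.isProbabilityMeasure_map hf.aemeasurable
  haveI hγprob := hγ.1
  set ρ : Measure (Euc n × Euc m) := μ'.map (fun x => (f x, x)) with hρdef
  haveI : IsProbabilityMeasure ρ :=
    Measure.isProbabilityMeasure_map (hf.prodMk measurable_id').aemeasurable
  set κ := ρ.condKernel with hκdef
  have hfst : ρ.fst = μ := by
    rw [hρdef, Measure.fst, Measure.map_map measurable_fst (hf.prodMk measurable_id')]
    exact hfp
  have hcomp : μ ⊗ₘ κ = ρ := by
    rw [← hfst, hκdef]; exact ρ.disintegrate ρ.condKernel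
  -- the marginal identity
  have hκμ : ∀ s : Set (Euc m), MeasurableSet s → ∫⁻ a, κ a s ∂μ = μ' s := by
    intro s hs
    have h1 : (μ ⊗ₘ κ) (Prod.snd ⁻¹' s) = ∫⁻ a, κ a (Prod.mk a ⁻¹' (Prod.snd ⁻¹' s)) ∂μ :=
      Measure.compProd_apply (measurable_snd hs)
    have h2 : ∀ a : Euc n, Prod.mk a ⁻¹' (Prod.snd ⁻¹' s) = s := fun a => rfl
    simp only [h2] at h1
    rw [← h1, hcomp, hρdef, Measure.map_apply (hf.prodMk measurable_id') (measurable_snd hs)]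
    rfl
  -- the fiber property
  have hNm : MeasurableSet {p : Euc n × Euc m | f p.2 = p.1} :=
    measurableSet_eq_fun (hf.comp measurable_snd) measurable_fst
  have hρN : ρ {p : Euc n × Euc m | f p.2 = p.1}ᶜ = 0 := by
    rw [hρdef, Measure.map_apply (hf.prodMk measurable_id') hNm.compl]
    have he : (fun x : Euc m => (f x, x)) ⁻¹' {p : Euc n × Euc m | f p.2 = p.1}ᶜ = ∅ := by
      ext x; simp
    simp [he]
  have hae : ∀ᵐ a ∂μ, κ a {b | f b ≠ a} = 0 := by
    have h1 : (μ ⊗ₘ κ) {p : Euc n × Euc m | f p.2 = p.1}ᶜ = 0 := by rw [hcomp]; exact hρN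
    rw [Measure.compProd_apply hNm.compl] at h1
    have h2 := (lintegral_eq_zero_iff
      (Kernel.measurable_kernel_prodMk_left hNm.compl)).mp h1
    filter_upwards [h2] with a ha
    exact ha
  have hdirac : ∀ᵐ a ∂μ, (κ a).map f = Measure.dirac a := by
    filter_upwards [hae] with a ha
    ext s hs
    rw [Measure.map_apply hf hs, Measure.dirac_apply' a hs]
    by_cases has : a ∈ s
    · have hle : (1 : ℝ≥0∞) ≤ κ a (f ⁻¹' s) := by
        have huniv : (univ : Set (Euc m)) ⊆ f ⁻¹' s ∪ {b | f b ≠ a} := by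
          intro b _
          by_cases hb : f b = a
          · exact Or.inl (by simp [hb, has])
          · exact Or.inr hb
        calc (1 : ℝ≥0∞) = κ a univ := (measure_univ).symm
          _ ≤ κ a (f ⁻¹' s ∪ {b | f b ≠ a}) := measure_mono huniv
          _ ≤ κ a (f ⁻¹' s) + κ a {b | f b ≠ a} := measure_union_le _ _
          _ = κ a (f ⁻¹' s) := by rw [ha, add_zero]
      have := (measure_mono (subset_univ (f ⁻¹' s))).trans_eq (measure_univ (μ := κ a))
      simp [has, le_antisymm this hle]
    · have hsub : f ⁻¹' s ⊆ {b | f b ≠ a} := by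
        intro b hb hba
        exact has (hba ▸ hb)
      simp [has, measure_mono_null hsub ha]
  -- the lifted plan
  set Λ : Kernel (Euc n × Euc n) (Euc m × Euc m) :=
    (κ.comap Prod.fst measurable_fst) ×ₖ (κ.comap Prod.snd measurable_snd) with hΛdef
  have hΛ : ∀ p : Euc n × Euc n, Λ p = (κ p.1).prod (κ p.2) := by
    intro p
    rw [hΛdef, Kernel.prod_apply, Kernel.comap_apply, Kernel.comap_apply]
  refine ⟨γ.bind Λ, ⟨?_, ?_, ?_⟩, ?_⟩
  · constructor
    rw [Measure.bind_apply MeasurableSet.univ Λ.measurable.aemeasurable]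
    simp only [hΛ]
    simp [measure_univ]
  · ext s hs
    rw [Measure.map_apply measurable_fst hs,
      Measure.bind_apply (measurable_fst hs) Λ.measurable.aemeasurable]
    have h1 : ∀ p : Euc n × Euc n, Λ p (Prod.fst ⁻¹' s) = κ p.1 s := by
      intro p
      rw [hΛ, ← Set.prod_univ, Measure.prod_prod, measure_univ, mul_one]
    simp only [h1]
    rw [← lintegral_map (Kernel.measurable_coe κ hs) measurable_fst, hγ.2.1, hκμ s hs]
  · ext s hs
    rw [Measure.map_apply measurable_snd hs,
      Measure.bind_apply (measurable_snd hs) Λ.measurable.aemeasurable]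
    have h1 : ∀ p : Euc n × Euc n, Λ p (Prod.snd ⁻¹' s) = κ p.2 s := by
      intro p
      rw [hΛ, ← Set.univ_prod, Measure.prod_prod, measure_univ, one_mul]
    simp only [h1]
    rw [← lintegral_map (Kernel.measurable_coe κ hs) measurable_snd, hγ.2.2, hκμ s hs]
  · ext s hs
    rw [Measure.map_apply (hf.prodMap hf) hs,
      Measure.bind_apply ((hf.prodMap hf) hs) Λ.measurable.aemeasurable]
    have hb1 : ∀ᵐ p ∂γ, (κ p.1).map f = Measure.dirac p.1 :=
      ae_of_ae_map measurable_fst.aemeasurable (by rw [hγ.2.1]; exact hdirac)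
    have hb2 : ∀ᵐ p ∂γ, (κ p.2).map f = Measure.dirac p.2 :=
      ae_of_ae_map measurable_snd.aemeasurable (by rw [hγ.2.2]; exact hdirac)
    have key : ∀ᵐ p ∂γ, Λ p (Prod.map f f ⁻¹' s) = s.indicator 1 p := by
      filter_upwards [hb1, hb2] with p h1 h2
      rw [hΛ, ← Measure.map_apply (hf.prodMap hf) hs, ← Measure.map_prod_map _ _ hf hf,
        h1, h2, Measure.dirac_prod_dirac]
      rw [Measure.dirac_apply' _ hs]
    rw [lintegral_congr_ae key, lintegral_indicator_one hs]

end Aux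

/-- **Transfer of the diameter bound through a Lipschitz measure-preserving map**
(Theorem `bendi`): `sup_{γ ∈ Γ(D)} δ̄_D(γ_i, γ) ≤ Lip(f) · sup_{γ' ∈ Γ(D')} δ̄_{D'}(γ_i, γ')`
(stated for the squared distances, with factor `Lip(f)²`). -/
theorem sup_deltaSq_le_lipschitz {m n : ℕ}
    (D' : Set (Euc m)) (D : Set (Euc n)) (hD' : IsCompact D') (hD : IsCompact D)
    (μ' : Measure (Euc m)) [IsProbabilityMeasure μ']
    (μ : Measure (Euc n)) [IsProbabilityMeasure μ]
    (hμ' : ∀ᵐ x ∂μ', x ∈ D') (hμ : ∀ᵐ x ∂μ, x ∈ D)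
    (f : Euc m → Euc n) (K : ℝ≥0) (hfL : LipschitzWith K f) (hfD : MapsTo f D' D)
    (hfp : μ'.map f = μ) :
    (⨆ γ : {γ : Measure (Euc n × Euc n) // IsPlan μ γ}, deltaSq μ (idPlan μ) γ.1) ≤
      (K : ℝ≥0∞) ^ 2 *
        ⨆ γ' : {γ' : Measure (Euc m × Euc m) // IsPlan μ' γ'}, deltaSq μ' (idPlan μ') γ'.1 := by
  have hf : Measurable f := hfL.continuous.measurable
  refine iSup_le fun γ => ?_
  obtain ⟨γ', hγ', hmap⟩ := exists_plan_lift hf hfp γ.2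
  have key : deltaSq μ (idPlan μ) γ.1 ≤ (K : ℝ≥0∞) ^ 2 * deltaSq μ' (idPlan μ') γ' := by
    haveI : Nonempty {P : Measure ((ℝ → Euc m) × Euc m) // IsGenFlow μ' (idPlan μ') γ' P} :=
      ⟨⟨_, flow_nonempty μ' hγ'⟩⟩
    rw [deltaSq, deltaSq, ENNReal.mul_iInf
      (fun h => absurd h (ENNReal.pow_ne_top ENNReal.coe_ne_top))]
    refine le_iInf fun P' => ?_
    have hflow := isGenFlow_comp hf hfp P'.2
    rw [hmap] at hflow
    exact le_trans (iInf_le _ ⟨_, hflow⟩) (flowAction_comp_le hf hfL P'.1)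
  exact key.trans (mul_le_mul_right
    (le_iSup (fun γ'' : {γ'' : Measure (Euc m × Euc m) // IsPlan μ' γ''} =>
      deltaSq μ' (idPlan μ') γ''.1) ⟨γ', hγ'⟩) _)
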